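/- arXiv:math/9210215 — 2 statements merged into one kernel-verified Lean document; each statement's English description precedes it below -/
import Mathlib

section
/- If {κ_j}_{j∈ℕ} is a bounded sequence of positive reals and {c_j}_{j∈ℕ} are positive reals with ∑_j c_j²/κ_j < ∞, then for each fixed (t,x) ∈ ℝ², the infinite matrix C_∞(t,x) with entries C_{jℓ} = (c_j c_ℓ/(κ_j+κ_ℓ)) exp(4(κ_j³+κ_ℓ³)t − (κ_j+κ_ℓ)x) defines a trace class operator on ℓ²(ℕ). -/
open scoped RealInnerProductSpace

noncomputable section

/-- ℓ²(ℕ) over the reals. -/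
abbrev H2 : Type := lp (fun _ : ℕ => ℝ) 2

/-- A bounded operator on ℓ² is trace class iff it admits a nuclear representation
`T f = ∑' n, ⟪u n, f⟫ • v n` with `∑ ‖u n‖ ‖v n‖ < ∞`. -/
def IsTraceClass (T : H2 →L[ℝ] H2) : Prop :=
  ∃ u v : ℕ → H2, Summable (fun n => ‖u n‖ * ‖v n‖) ∧
    ∀ f : H2, T f = ∑' n, ⟪u n, f⟫ • v n

/-- The matrix entries of `C_∞(t,x)`. -/
def solitonEntry (κ c : ℕ → ℝ) (t x : ℝ) (j l : ℕ) : ℝ :=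
  c j * c l / (κ j + κ l) * Real.exp (4 * ((κ j) ^ 3 + (κ l) ^ 3) * t - (κ j + κ l) * x)

lemma keySum {x y : ℝ} (hxy : |x| + |y| < 1) :
    HasSum (fun p : ℕ × ℕ => ((p.2 + p.1).choose p.1 : ℝ) * x ^ p.1 * y ^ p.2)
      (1 - x - y)⁻¹ := by
  have hy : |y| < 1 := lt_of_le_of_lt (le_add_of_nonneg_left (abs_nonneg x)) hxy
  have hy' : ‖y‖ < 1 := hy
  have h1y : (0:ℝ) < 1 - |y| := by linarith
  have h1y' : (0:ℝ) < 1 - y := by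
    have := le_abs_self y; linarith
  have hne : (1 : ℝ) - y ≠ 0 := ne_of_gt h1y'
  have hne2 : (1:ℝ) - x - y ≠ 0 := by
    have hx := le_abs_self x; have hyy := le_abs_self y
    have : x + y < 1 := by linarith
    linarith
  have hratio : ‖x / (1 - y)‖ < 1 := by
    rw [Real.norm_eq_abs, abs_div, abs_of_pos h1y', div_lt_one h1y']
    linarith [le_abs_self y]
  have hfib : ∀ k : ℕ, HasSum (fun n : ℕ => ((n + k).choose k : ℝ) * x ^ k * y ^ n)
      (x ^ k * (1 / (1 - y) ^ (k + 1))) := by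
    intro k
    have := (hasSum_choose_mul_geometric_of_norm_lt_one (𝕜 := ℝ) k hy').mul_left (x ^ k)
    convert this using 2 with n
    · rfl
    ring
  have hgeo : HasSum (fun k : ℕ => x ^ k * (1 / (1 - y) ^ (k + 1))) (1 - x - y)⁻¹ := by
    have h := (hasSum_geometric_of_norm_lt_one hratio).mul_left (1 / (1 - y))
    have heqf : (fun k : ℕ => x ^ k * (1 / (1 - y) ^ (k + 1)))
        = fun k : ℕ => 1 / (1 - y) * (x / (1 - y)) ^ k := by
      funext k
      rw [div_pow, pow_succ]
      field_simp
    have hval : 1 / (1 - y) * (1 - x / (1 - y))⁻¹ = (1 - x - y)⁻¹ := by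
      have h3 : 1 - x / (1 - y) = (1 - x - y) / (1 - y) := by field_simp; ring
      rw [h3, inv_div]
      field_simp
    rw [heqf, ← hval]
    exact h
  have habs : Summable (fun p : ℕ × ℕ =>
      ‖((p.2 + p.1).choose p.1 : ℝ) * x ^ p.1 * y ^ p.2‖) := by
    have heq : (fun p : ℕ × ℕ => ‖((p.2 + p.1).choose p.1 : ℝ) * x ^ p.1 * y ^ p.2‖)
        = fun p : ℕ × ℕ => ((p.2 + p.1).choose p.1 : ℝ) * |x| ^ p.1 * |y| ^ p.2 := by
      funext p
      rw [Real.norm_eq_abs, abs_mul, abs_mul, abs_pow, abs_pow, Nat.abs_cast]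
    rw [heq]
    have hay : ‖|y|‖ < 1 := by rwa [Real.norm_eq_abs, abs_abs]
    apply (summable_prod_of_nonneg (fun p => by positivity)).2
    constructor
    · intro k
      apply (((hasSum_choose_mul_geometric_of_norm_lt_one (𝕜 := ℝ) k hay).mul_left
        (|x| ^ k)).summable).congr
      intro n
      ring
    · have hr2 : ‖|x| / (1 - |y|)‖ < 1 := by
        rw [Real.norm_eq_abs, abs_div, abs_abs, abs_of_pos h1y, div_lt_one h1y]
        linarith
      apply Summable.congr (((hasSum_geometric_of_norm_lt_one hr2).mul_left
        (1 / (1 - |y|))).summable)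
      intro k
      have hts : ∑' n : ℕ, ((n + k).choose k : ℝ) * |x| ^ k * |y| ^ n
          = |x| ^ k * (1 / (1 - |y|) ^ (k + 1)) := by
        refine HasSum.tsum_eq ?_
        have := (hasSum_choose_mul_geometric_of_norm_lt_one (𝕜 := ℝ) k hay).mul_left (|x| ^ k)
        convert this using 2 with n
        · rfl
        ring
      rw [eq_comm, hts, div_pow, pow_succ]
      have hne3 : (1 : ℝ) - |y| ≠ 0 := ne_of_gt h1y
      field_simp
  have hsummable : Summable (fun p : ℕ × ℕ =>
      ((p.2 + p.1).choose p.1 : ℝ) * x ^ p.1 * y ^ p.2) := habs.of_norm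
  have hS := hsummable.hasSum
  have := hS.prod_fiberwise hfib
  rwa [this.unique hgeo] at hS

set_option maxHeartbeats 1000000

theorem statement0 (κ c : ℕ → ℝ) (hκ : ∀ j, 0 < κ j)
    (hbd : ∃ M, ∀ j, κ j ≤ M) (hc : ∀ j, 0 < c j)
    (hsum : Summable (fun j => (c j) ^ 2 / κ j)) (t x : ℝ) :
    ∃ T : H2 →L[ℝ] H2,
      (∀ j l : ℕ, ⟪lp.single 2 j (1 : ℝ), T (lp.single 2 l (1 : ℝ))⟫ =
        solitonEntry κ c t x j l) ∧ IsTraceClass T := by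
  classical
  obtain ⟨M₀, hM₀⟩ := hbd
  set M : ℝ := max M₀ 1 with hMdef
  have hM1 : (1:ℝ) ≤ M := le_max_right _ _
  have hM0 : (0:ℝ) < M := lt_of_lt_of_le one_pos hM1
  have h2M : (0:ℝ) < 2 * M := by linarith
  have hκM : ∀ j, κ j ≤ M := fun j => le_trans (hM₀ j) (le_max_left _ _)
  set a : ℕ → ℝ := fun j => κ j / (2 * M) with ha
  have ha0 : ∀ j, 0 < a j := fun j => div_pos (hκ j) h2M
  have ha2 : ∀ j, a j ≤ 1 / 2 := by
    intro j
    rw [ha]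
    rw [div_le_div_iff₀ h2M two_pos]
    have := hκM j; linarith
  have ha1 : ∀ j, a j < 1 := fun j => lt_of_le_of_lt (ha2 j) (by norm_num)
  set b : ℕ → ℝ := fun j => c j * Real.exp (4 * (κ j) ^ 3 * t - κ j * x) with hb
  set β : ℕ → ℝ := fun j => b j / Real.sqrt (2 * M) with hβ
  have hsqrt0 : (0:ℝ) < Real.sqrt (2 * M) := Real.sqrt_pos.2 h2M
  have hsqrtsq : Real.sqrt (2 * M) * Real.sqrt (2 * M) = 2 * M :=
    Real.mul_self_sqrt (le_of_lt h2M)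
  -- Summability of b² / κ
  have hsumb : Summable (fun j => b j ^ 2 / κ j) := by
    set K : ℝ := Real.exp (8 * M ^ 3 * |t| + 2 * M * |x|) with hK
    apply Summable.of_nonneg_of_le
      (fun j => div_nonneg (sq_nonneg _) (hκ j).le) (fun j => ?_) (hsum.mul_left K)
    have hexp : Real.exp (4 * (κ j) ^ 3 * t - κ j * x) ^ 2 ≤ K := by
      rw [← Real.exp_nat_mul]
      apply Real.exp_le_exp.2
      have hκ0 := (hκ j).le
      have hκ3 : (κ j) ^ 3 ≤ M ^ 3 := pow_le_pow_left₀ hκ0 (hκM j) 3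
      have h1 : 4 * (κ j) ^ 3 * t ≤ 4 * M ^ 3 * |t| := by
        calc 4 * (κ j) ^ 3 * t ≤ 4 * (κ j) ^ 3 * |t| := by
              apply mul_le_mul_of_nonneg_left (le_abs_self t) (by positivity)
        _ ≤ 4 * M ^ 3 * |t| := by
              apply mul_le_mul_of_nonneg_right (by linarith) (abs_nonneg t)
      have h2 : -(κ j * x) ≤ M * |x| := by
        calc -(κ j * x) = κ j * (-x) := by ring
        _ ≤ κ j * |x| := mul_le_mul_of_nonneg_left (neg_le_abs x) hκ0
        _ ≤ M * |x| := mul_le_mul_of_nonneg_right (hκM j) (abs_nonneg x)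
      push_cast
      nlinarith [abs_nonneg t, abs_nonneg x]
    have : b j ^ 2 / κ j = (c j ^ 2 / κ j) * Real.exp (4 * (κ j) ^ 3 * t - κ j * x) ^ 2 := by
      rw [hb]; field_simp
    rw [this, mul_comm K]
    exact mul_le_mul_of_nonneg_left hexp (div_nonneg (sq_nonneg _) (hκ j).le)
  have hsumb2 : Summable (fun j => b j ^ 2) := by
    apply Summable.of_nonneg_of_le (fun j => sq_nonneg _) (fun j => ?_) (hsumb.mul_left M)
    calc b j ^ 2 = (b j ^ 2 / κ j) * κ j := (div_mul_cancel₀ _ (ne_of_gt (hκ j))).symm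
    _ ≤ (b j ^ 2 / κ j) * M :=
        mul_le_mul_of_nonneg_left (hκM j) (div_nonneg (sq_nonneg _) (hκ j).le)
    _ = M * (b j ^ 2 / κ j) := mul_comm _ _
  have hβsq : ∀ j, β j ^ 2 = b j ^ 2 / (2 * M) := by
    intro j
    rw [hβ, div_pow, sq (Real.sqrt (2*M)), hsqrtsq]
  have hβa : ∀ j, β j ^ 2 / a j = b j ^ 2 / κ j := by
    intro j
    rw [hβsq]
    show b j ^ 2 / (2 * M) / (κ j / (2 * M)) = b j ^ 2 / κ j
    rw [div_div_div_comm, div_self (ne_of_gt h2M), div_one]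
  -- coordinate functions
  set g : ℕ × ℕ → ℕ → ℝ := fun p j => β j * a j ^ p.1 * (1 - a j) ^ p.2 with hg
  have hgsq : ∀ p j, g p j ^ 2 = β j ^ 2 * (a j ^ 2) ^ p.1 * ((1 - a j) ^ 2) ^ p.2 := by
    intro p j
    simp only [hg]
    generalize β j = B
    generalize a j = A
    generalize (1 - A : ℝ) = D
    ring
  have hone_sub : ∀ j, 0 < 1 - a j := fun j => by have := ha1 j; linarith
  have hgle : ∀ p j, |g p j| ≤ |β j| := by
    intro p j
    rw [hg]
    simp only [abs_mul]
    have h1 : |a j ^ p.1| ≤ 1 := by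
      rw [abs_pow]
      apply pow_le_one₀ (abs_nonneg _)
      rw [abs_of_pos (ha0 j)]
      exact (ha1 j).le
    have h2 : |(1 - a j) ^ p.2| ≤ 1 := by
      rw [abs_pow]
      apply pow_le_one₀ (abs_nonneg _)
      rw [abs_of_pos (hone_sub j)]
      have := ha0 j; linarith
    calc |β j| * |a j ^ p.1| * |(1 - a j) ^ p.2| ≤ |β j| * 1 * 1 := by
          apply mul_le_mul (mul_le_mul le_rfl h1 (abs_nonneg _) (abs_nonneg _)) h2
            (abs_nonneg _) (by positivity)
    _ = |β j| := by ring
  -- membership in ℓ²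
  have hmem : ∀ p : ℕ × ℕ, Memℓp (g p) 2 := by
    intro p
    apply memℓp_gen
    have h2r : (2 : ENNReal).toReal = 2 := by norm_num
    rw [h2r]
    have hβsum : Summable (fun j => β j ^ 2) := by
      apply Summable.of_nonneg_of_le (fun j => sq_nonneg _) (fun j => ?_)
        (hsumb2.mul_left (1 / (2*M)))
      rw [hβsq]
      rw [div_eq_mul_inv, one_div, mul_comm (b j ^2)]
    apply Summable.of_nonneg_of_le
      (fun j => Real.rpow_nonneg (norm_nonneg _) _) (fun j => ?_) hβsum
    rw [Real.norm_eq_abs, show ((2:ℝ)) = ((2:ℕ):ℝ) by norm_num, Real.rpow_natCast]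
    calc |g p j| ^ 2 ≤ |β j| ^ 2 := by
          apply pow_le_pow_left₀ (abs_nonneg _) (hgle p j)
    _ = β j ^ 2 := sq_abs _
  set w : ℕ × ℕ → H2 := fun p => ⟨g p, hmem p⟩ with hw
  have hwcoe : ∀ p j, (w p : ∀ _ : ℕ, ℝ) j = g p j := fun p j => rfl
  set C : ℕ × ℕ → ℝ := fun p => ((p.2 + p.1).choose p.1 : ℝ) with hC
  have hC0 : ∀ p, 0 ≤ C p := fun p => Nat.cast_nonneg _
  set u : ℕ × ℕ → H2 := fun p => Real.sqrt (C p) • w p with hu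
  set v : ℕ × ℕ → H2 := fun p => ((-1:ℝ) ^ p.1 * Real.sqrt (C p)) • w p with hv
  -- inner products with w
  have hinner_w : ∀ p, ⟪w p, w p⟫ = ∑' j, g p j ^ 2 := by
    intro p
    rw [lp.inner_eq_tsum]
    congr 1
    funext j
    rw [hwcoe]
    simp [RCLike.inner_apply, sq]
  -- the key product-summability
  have hxy : ∀ j l : ℕ, |(-(a j * a l))| + |(1 - a j) * (1 - a l)| < 1 := by
    intro j l
    rw [abs_neg, abs_of_pos (mul_pos (ha0 j) (ha0 l)),
      abs_of_pos (mul_pos (hone_sub j) (hone_sub l))]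
    nlinarith [ha0 j, ha0 l, ha1 j, ha1 l, mul_pos (ha0 j) (hone_sub l),
      mul_pos (ha0 l) (hone_sub j)]
  have hfiber : ∀ j : ℕ, HasSum (fun p : ℕ × ℕ =>
      β j ^ 2 * (C p * (a j ^ 2) ^ p.1 * ((1 - a j) ^ 2) ^ p.2))
      (β j ^ 2 * (1 - a j ^ 2 - (1 - a j) ^ 2)⁻¹) := by
    intro j
    have hx : |a j ^ 2| + |(1 - a j) ^ 2| < 1 := by
      rw [abs_of_pos (pow_pos (ha0 j) 2), abs_of_pos (pow_pos (hone_sub j) 2)]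
      nlinarith [ha0 j, ha1 j]
    exact ((keySum hx).mul_left (β j ^ 2)).congr_fun
      (fun p => by simp only [hC])
  have hFsum : Summable (fun q : ℕ × (ℕ × ℕ) =>
      β q.1 ^ 2 * (C q.2 * (a q.1 ^ 2) ^ q.2.1 * ((1 - a q.1) ^ 2) ^ q.2.2)) := by
    apply (summable_prod_of_nonneg (fun q => by
      have := hC0 q.2; positivity)).2
    constructor
    · intro j
      exact (hfiber j).summable
    · apply Summable.of_nonneg_of_le (fun j => ?_) (fun j => ?_) hsumb
      · rw [(hfiber j).tsum_eq]
        have h1 : (0:ℝ) < 1 - a j ^ 2 - (1 - a j) ^ 2 := by nlinarith [ha0 j, ha1 j]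
        positivity
      · rw [(hfiber j).tsum_eq]
        rw [← hβa j]
        have h1 : 1 - a j ^ 2 - (1 - a j) ^ 2 = 2 * a j * (1 - a j) := by ring
        rw [h1, div_eq_mul_inv]
        apply mul_le_mul_of_nonneg_left _ (sq_nonneg _)
        apply inv_anti₀ (ha0 j)
        nlinarith [ha2 j, ha0 j]
  have hnuc : Summable (fun p : ℕ × ℕ => ‖u p‖ * ‖v p‖) := by
    have hFsum' : Summable (fun q : (ℕ × ℕ) × ℕ =>
        β q.2 ^ 2 * (C q.1 * (a q.2 ^ 2) ^ q.1.1 * ((1 - a q.2) ^ 2) ^ q.1.2)) := by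
      exact hFsum.prod_symm
    have hmain : Summable (fun p : ℕ × ℕ =>
        ∑' j, β j ^ 2 * (C p * (a j ^ 2) ^ p.1 * ((1 - a j) ^ 2) ^ p.2)) := by
      exact ((summable_prod_of_nonneg (fun q => by have := hC0 q.1; positivity)).1 hFsum').2
    apply hmain.congr
    intro p
    have hnu : ‖u p‖ = Real.sqrt (C p) * ‖w p‖ := by
      rw [hu, norm_smul, Real.norm_eq_abs, abs_of_nonneg (Real.sqrt_nonneg _)]
    have hnv : ‖v p‖ = Real.sqrt (C p) * ‖w p‖ := by
      rw [hv, norm_smul, Real.norm_eq_abs, abs_mul, abs_pow, abs_neg, abs_one, one_pow,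
        one_mul, abs_of_nonneg (Real.sqrt_nonneg _)]
    rw [hnu, hnv]
    have : Real.sqrt (C p) * ‖w p‖ * (Real.sqrt (C p) * ‖w p‖)
        = C p * ‖w p‖ ^ 2 := by
      rw [show Real.sqrt (C p) * ‖w p‖ * (Real.sqrt (C p) * ‖w p‖)
          = (Real.sqrt (C p) * Real.sqrt (C p)) * (‖w p‖ * ‖w p‖) by ring,
        Real.mul_self_sqrt (hC0 p), sq]
    rw [this, ← real_inner_self_eq_norm_sq, hinner_w, ← tsum_mul_left]
    congr 1
    funext j
    rw [hgsq]
    ring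
  -- the rank-one pieces and the operator
  set rank : ℕ × ℕ → H2 →L[ℝ] H2 := fun p => (innerSL ℝ (u p)).smulRight (v p) with hrank
  have hranknorm : ∀ p, ‖rank p‖ = ‖u p‖ * ‖v p‖ := by
    intro p
    rw [hrank]
    rw [ContinuousLinearMap.norm_smulRight_apply, innerSL_apply_norm]
  have hranksum : Summable rank := by
    apply Summable.of_norm
    apply hnuc.congr
    intro p
    rw [hranknorm]
  set T : H2 →L[ℝ] H2 := ∑' p, rank p with hT
  have hTsum : HasSum rank T := hranksum.hasSum
  have happly : ∀ f : H2, HasSum (fun p => ⟪u p, f⟫ • v p) (T f) := by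
    intro f
    have := hTsum.mapL (ContinuousLinearMap.apply ℝ H2 f)
    apply this.congr_fun fun p => ?_
    simp [hrank]
  refine ⟨T, fun j l => ?_, ?_⟩
  · -- matrix entries
    have h1 := (happly (lp.single 2 l (1:ℝ))).mapL (innerSL ℝ (lp.single 2 j (1:ℝ)))
    have hterm : ∀ p : ℕ × ℕ,
        (innerSL ℝ (lp.single 2 j (1:ℝ))) (⟪u p, lp.single 2 l (1:ℝ)⟫ • v p)
        = (β j * β l) * (C p * (-(a j * a l)) ^ p.1 * ((1 - a j) * (1 - a l)) ^ p.2) := by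
      intro p
      rw [innerSL_apply_apply, real_inner_smul_right]
      have hul : ⟪u p, lp.single 2 l (1:ℝ)⟫ = Real.sqrt (C p) * g p l := by
        rw [lp.inner_single_right]
        have : (u p : ∀ _ : ℕ, ℝ) l = Real.sqrt (C p) * g p l := by
          rw [hu, lp.coeFn_smul]
          simp [hwcoe]
        rw [this]
        simp [RCLike.inner_apply]
      have hvj : ⟪lp.single 2 j (1:ℝ), v p⟫ = ((-1:ℝ) ^ p.1 * Real.sqrt (C p)) * g p j := by
        rw [lp.inner_single_left]
        have : (v p : ∀ _ : ℕ, ℝ) j = ((-1:ℝ) ^ p.1 * Real.sqrt (C p)) * g p j := by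
          rw [hv, lp.coeFn_smul]
          simp [hwcoe]
        rw [this]
        simp [RCLike.inner_apply]
      rw [hul, hvj]
      simp only [hg]
      have hsq : Real.sqrt (C p) * Real.sqrt (C p) = C p := Real.mul_self_sqrt (hC0 p)
      have hneg : (-(a j * a l)) ^ p.1 = (-1:ℝ) ^ p.1 * (a j ^ p.1 * a l ^ p.1) := by
        rw [neg_pow, mul_pow]
      have hmul : ((1 - a j) * (1 - a l)) ^ p.2 = (1 - a j) ^ p.2 * (1 - a l) ^ p.2 :=
        mul_pow _ _ _
      rw [hneg, hmul]
      linear_combination ((-1:ℝ) ^ p.1 * (β l * a l ^ p.1 * (1 - a l) ^ p.2) *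
        (β j * a j ^ p.1 * (1 - a j) ^ p.2)) * hsq
    have h2 := h1.congr_fun (fun p => (hterm p).symm)
    have h3 := (keySum (hxy j l)).mul_left (β j * β l)
    have h4 : (fun p : ℕ × ℕ => (β j * β l) *
        (((p.2 + p.1).choose p.1 : ℝ) * (-(a j * a l)) ^ p.1 * ((1 - a j) * (1 - a l)) ^ p.2))
        = fun p : ℕ × ℕ => (β j * β l) *
        (C p * (-(a j * a l)) ^ p.1 * ((1 - a j) * (1 - a l)) ^ p.2) := rfl
    rw [h4] at h3
    have h5 := h2.unique h3
    rw [innerSL_apply_apply] at h5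
    rw [h5]
    -- final arithmetic
    have hXY : 1 - (-(a j * a l)) - (1 - a j) * (1 - a l) = a j + a l := by ring
    rw [hXY]
    have hajl : a j + a l = (κ j + κ l) / (2 * M) := by rw [ha]; ring
    have hββ : β j * β l = b j * b l / (2 * M) := by
      rw [hβ]
      rw [div_mul_div_comm, hsqrtsq]
    rw [hajl, hββ]
    have hκjl : (0:ℝ) < κ j + κ l := by have := hκ j; have := hκ l; linarith
    have hbb : b j * b l = c j * c l *
        Real.exp (4 * ((κ j) ^ 3 + (κ l) ^ 3) * t - (κ j + κ l) * x) := by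
      simp only [hb]
      rw [show c j * Real.exp (4 * κ j ^ 3 * t - κ j * x) *
          (c l * Real.exp (4 * κ l ^ 3 * t - κ l * x))
          = c j * c l * (Real.exp (4 * κ j ^ 3 * t - κ j * x) *
            Real.exp (4 * κ l ^ 3 * t - κ l * x)) by ring, ← Real.exp_add]
      congr 2
      ring
    rw [hbb, solitonEntry]
    rw [inv_div]
    field_simp
    try ring
  · -- trace class
    set e : ℕ ≃ ℕ × ℕ := (Denumerable.eqv (ℕ × ℕ)).symm with he
    refine ⟨u ∘ e, v ∘ e, ?_, ?_⟩
    · exact (e.summable_iff).2 hnuc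
    · intro f
      have h1 : ∑' n, ⟪(u ∘ e) n, f⟫ • (v ∘ e) n = ∑' p, ⟪u p, f⟫ • v p :=
        e.tsum_eq (fun p => ⟪u p, f⟫ • v p)
      rw [h1]
      exact (happly f).tsum_eq.symm

end
end

section
/- The operator C_∞(t,x) is positive semidefinite on ℓ²(ℕ); in particular 1 + C_∞(t,x) is invertible with bounded inverse. -/
open scoped RealInnerProductSpace
open MeasureTheory Set

noncomputable section

lemma integral_exp_neg_mul {b : ℝ} (hb : 0 < b) :
    ∫ u in Ioi (0:ℝ), Real.exp (-b * u) = b⁻¹ := by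
  have h := integral_comp_mul_left_Ioi (fun y => Real.exp (-y)) 0 hb
  simp only [mul_zero, integral_exp_neg_Ioi_zero, smul_eq_mul, mul_one, neg_mul] at h ⊢
  simpa using h

lemma cauchy_gram_nonneg (κ : ℕ → ℝ) (hκ : ∀ j, 0 < κ j) (b : ℕ → ℝ) (s : Finset ℕ) :
    0 ≤ ∑ j ∈ s, ∑ l ∈ s, b j * b l * (κ j + κ l)⁻¹ := by
  have key : ∀ j l : ℕ, b j * b l * (κ j + κ l)⁻¹
      = ∫ u in Ioi (0:ℝ), (b j * Real.exp (-κ j * u)) * (b l * Real.exp (-κ l * u)) := by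
    intro j l
    have h : ∀ u : ℝ, (b j * Real.exp (-κ j * u)) * (b l * Real.exp (-κ l * u))
        = (b j * b l) * Real.exp (-(κ j + κ l) * u) := by
      intro u
      rw [show (-(κ j + κ l) * u) = (-κ j * u) + (-κ l * u) by ring, Real.exp_add]
      ring
    simp_rw [h]
    rw [MeasureTheory.integral_const_mul, integral_exp_neg_mul (by have := hκ j; have := hκ l; linarith)]
  have hint : ∀ j l : ℕ, IntegrableOn
      (fun u => (b j * Real.exp (-κ j * u)) * (b l * Real.exp (-κ l * u))) (Ioi (0:ℝ)) := by
    intro j l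
    have h : ∀ u : ℝ, (b j * Real.exp (-κ j * u)) * (b l * Real.exp (-κ l * u))
        = (b j * b l) * Real.exp (-(κ j + κ l) * u) := by
      intro u
      rw [show (-(κ j + κ l) * u) = (-κ j * u) + (-κ l * u) by ring, Real.exp_add]
      ring
    simp_rw [h]
    exact (exp_neg_integrableOn_Ioi 0 (by have := hκ j; have := hκ l; linarith)).const_mul _
  calc (0:ℝ) ≤ ∫ u in Ioi (0:ℝ), (∑ j ∈ s, b j * Real.exp (-κ j * u)) ^ 2 := by
        apply setIntegral_nonneg measurableSet_Ioi
        intro u _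
        positivity
    _ = ∫ u in Ioi (0:ℝ), ∑ p ∈ s ×ˢ s,
          (b p.1 * Real.exp (-κ p.1 * u)) * (b p.2 * Real.exp (-κ p.2 * u)) := by
        congr 1
        ext u
        rw [sq, Finset.sum_mul_sum, ← Finset.sum_product']
    _ = ∑ p ∈ s ×ˢ s, ∫ u in Ioi (0:ℝ),
          (b p.1 * Real.exp (-κ p.1 * u)) * (b p.2 * Real.exp (-κ p.2 * u)) := by
        exact integral_finset_sum _ (fun p _ => hint p.1 p.2)
    _ = ∑ j ∈ s, ∑ l ∈ s, b j * b l * (κ j + κ l)⁻¹ := by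
        rw [Finset.sum_product]
        exact Finset.sum_congr rfl fun j _ => Finset.sum_congr rfl fun l _ => (key j l).symm

/-- `C_∞(t,x)` is a positive (semidefinite) operator on ℓ²(ℕ); in particular
`1 + C_∞(t,x)` is boundedly invertible. -/
theorem statement2 (κ c : ℕ → ℝ) (hκ : ∀ j, 0 < κ j)
    (hbd : ∃ M, ∀ j, κ j ≤ M) (hinj : Function.Injective κ) (hc : ∀ j, 0 < c j)
    (hsum : Summable (fun j => (c j) ^ 2 / κ j)) (t x : ℝ)
    (Cinf : H2 →L[ℝ] H2)
    (hCinf : ∀ j l : ℕ, ⟪lp.single 2 j (1 : ℝ), Cinf (lp.single 2 l (1 : ℝ))⟫ =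
      solitonEntry κ c t x j l) :
    Cinf.IsPositive ∧ IsUnit ((1 : H2 →L[ℝ] H2) + Cinf) := by
  -- quadratic form on finite sets
  have quad : ∀ (f g : H2) (s : Finset ℕ),
      ⟪(∑ j ∈ s, lp.single 2 j (f j : ℝ)), Cinf (∑ l ∈ s, lp.single 2 l (g l : ℝ))⟫ =
      ∑ j ∈ s, ∑ l ∈ s, (f j) * (g l) * solitonEntry κ c t x j l := by
    intro f g s
    rw [map_sum, sum_inner]
    refine Finset.sum_congr rfl fun j _ => ?_
    rw [inner_sum]
    refine Finset.sum_congr rfl fun l _ => ?_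
    have h1 : (lp.single 2 j (f j : ℝ) : H2) = (f j : ℝ) • (lp.single 2 j (1 : ℝ) : H2) := by
      rw [← lp.single_smul]; norm_num
    have h2 : (lp.single 2 l (g l : ℝ) : H2) = (g l : ℝ) • (lp.single 2 l (1 : ℝ) : H2) := by
      rw [← lp.single_smul]; norm_num
    rw [h1, h2, Cinf.map_smul, real_inner_smul_left, real_inner_smul_right, hCinf]
    ring
  have hTend : ∀ f g : H2, Filter.Tendsto
      (fun s : Finset ℕ => ∑ j ∈ s, ∑ l ∈ s, (f j) * (g l) * solitonEntry κ c t x j l)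
      Filter.atTop (nhds ⟪f, Cinf g⟫) := by
    intro f g
    have hf := lp.hasSum_single (E := fun _ : ℕ => ℝ) (p := 2) (by norm_num) f
    have hg := lp.hasSum_single (E := fun _ : ℕ => ℝ) (p := 2) (by norm_num) g
    have h1 : Filter.Tendsto (fun s : Finset ℕ => Cinf (∑ l ∈ s, lp.single 2 l (g l : ℝ)))
        Filter.atTop (nhds (Cinf g)) := (Cinf.continuous.tendsto g).comp hg
    have h2 := Filter.Tendsto.inner (𝕜 := ℝ) hf h1
    simp only [quad] at h2
    exact h2
  have symC : ∀ j l, solitonEntry κ c t x j l = solitonEntry κ c t x l j := by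
    intro j l
    unfold solitonEntry
    rw [add_comm (κ j) (κ l), add_comm ((κ j) ^ 3) ((κ l) ^ 3), mul_comm (c j) (c l)]
  have hsym : ∀ f g : H2, ⟪Cinf f, g⟫ = ⟪f, Cinf g⟫ := by
    intro f g
    rw [real_inner_comm]
    refine tendsto_nhds_unique ?_ (hTend f g)
    have := hTend g f
    convert this using 2 with s
    rw [Finset.sum_comm]
    exact Finset.sum_congr rfl fun j _ => Finset.sum_congr rfl fun l _ => by
      rw [symC j l]; ring
  have hpos : ∀ f : H2, 0 ≤ ⟪f, Cinf f⟫ := by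
    intro f
    refine ge_of_tendsto' (hTend f f) fun s => ?_
    have hent : ∀ j l : ℕ, (f j) * (f l) * solitonEntry κ c t x j l =
        ((f j) * (c j * Real.exp (4 * (κ j) ^ 3 * t - κ j * x))) *
        ((f l) * (c l * Real.exp (4 * (κ l) ^ 3 * t - κ l * x))) * (κ j + κ l)⁻¹ := by
      intro j l
      unfold solitonEntry
      rw [show (4 * ((κ j) ^ 3 + (κ l) ^ 3) * t - (κ j + κ l) * x)
          = (4 * (κ j) ^ 3 * t - κ j * x) + (4 * (κ l) ^ 3 * t - κ l * x) by ring,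
        Real.exp_add]
      field_simp
    simp_rw [hent]
    exact cauchy_gram_nonneg κ hκ _ s
  constructor
  · constructor
    · intro f g
      exact hsym f g
    · intro f
      have : Cinf.reApplyInnerSelf f = ⟪Cinf f, f⟫ := rfl
      rw [this, real_inner_comm]
      exact hpos f
  · refine ContinuousLinearMap.isUnit_of_forall_le_norm_inner_map _ (c := 1) one_pos fun v => ?_
    have h1 : ⟪((1 : H2 →L[ℝ] H2) + Cinf) v, v⟫ = ‖v‖ ^ 2 + ⟪Cinf v, v⟫ := by
      simp [inner_add_left, real_inner_self_eq_norm_sq]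
    have h2 : 0 ≤ ⟪Cinf v, v⟫ := by rw [real_inner_comm]; exact hpos v
    rw [Real.norm_eq_abs, h1, abs_of_nonneg (by positivity), NNReal.coe_one, mul_one]
    linarith

end
end
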